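/- Let $\psi^{n,m}_N$ satisfy the bilinear equations $\psi^{n,m}_{N+1}\psi^{n+1,m+1}_N - Q^{-12n+12N}\alpha_0^{-12}\psi^{n+1,m}_N\psi^{n,m+1}_{N+1}+Q^{-12n}\alpha_0^{-12}\psi^{n,m}_N\psi^{n+1,m+1}_{N+1}=0$ and $\psi^{n+1,m+1}_{N+1}\psi^{n,m}_N-\psi^{n+1,m}_{N+1}\psi^{n,m+1}_N+Q^{12m+12}\alpha_2^{-12}\psi^{n+1,m+1}_N\psi^{n,m}_{N+1}=0$, where $Q^6=q$, $\alpha_0^6=a_0$, $\alpha_2^6=a_2$. Then $f_n=-a_0 q^n\frac{\psi^{n,m-1}_{N+1}\psi^{n,m}_N}{\psi^{n,m}_{N+1}\psi^{n,m-1}_N}$ and $g_n=a_0^{-1}a_2 q^{-n-m+1}\frac{\psi^{n,m}_{N+1}\psi^{n-1,m-1}_N}{\psi^{n-1,m-1}_{N+1}\psi^{n,m}_N}$ satisfy the first equation of $q$-P$_{III}$ with $c=1$: $g_{n+1}=\frac{q^{2N+1}}{f_n g_n}\cdot\frac{1+a_0 q^n f_n}{a_0 q^n+f_n}$. -/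

import Mathlib

theorem stmt9 (q Q a0 α0 a2 α2 : ℂ) (hq : q ≠ 0) (hQ : Q ≠ 0) (ha0 : a0 ≠ 0) (hα0 : α0 ≠ 0)
    (ha2 : a2 ≠ 0) (hα2 : α2 ≠ 0) (hQ6 : Q ^ 6 = q) (hα06 : α0 ^ 6 = a0) (hα26 : α2 ^ 6 = a2)
    (ψ : ℤ → ℤ → ℤ → ℂ) (hψ : ∀ n m N : ℤ, ψ n m N ≠ 0)
    (hb1 : ∀ n m N : ℤ, ψ n m (N + 1) * ψ (n + 1) (m + 1) N -
      Q ^ (-12 * n + 12 * N) * α0 ^ (-12 : ℤ) * ψ (n + 1) m N * ψ n (m + 1) (N + 1) +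
      Q ^ (-12 * n) * α0 ^ (-12 : ℤ) * ψ n m N * ψ (n + 1) (m + 1) (N + 1) = 0)
    (hb2 : ∀ n m N : ℤ, ψ (n + 1) (m + 1) (N + 1) * ψ (n + 1) m N -
      Q ^ (-12 * N) * ψ n m N * ψ (n + 2) (m + 1) (N + 1) -
      Q ^ (12 * n + 12) * α0 ^ 12 * ψ (n + 1) (m + 1) N * ψ (n + 1) m (N + 1) = 0)
    (hb3 : ∀ n m N : ℤ, ψ (n + 1) (m + 1) (N + 1) * ψ n m N -
      ψ (n + 1) m (N + 1) * ψ n (m + 1) N +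
      Q ^ (12 * m + 12) * α2 ^ (-12 : ℤ) * ψ (n + 1) (m + 1) N * ψ n m (N + 1) = 0)
    (hb4 : ∀ n m N : ℤ, ψ (n + 1) m (N + 1) * ψ (n + 1) (m + 1) N -
      Q ^ (12 * m + 12) * α2 ^ (-12 : ℤ) * ψ n m (N + 1) * ψ (n + 2) (m + 1) N -
      ψ (n + 1) m N * ψ (n + 1) (m + 1) (N + 1) = 0)
    (m N : ℤ) (f g : ℤ → ℂ)
    (hf : ∀ n : ℤ, f n = -(a0 * q ^ n) * (ψ n (m - 1) (N + 1) * ψ n m N) /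
      (ψ n m (N + 1) * ψ n (m - 1) N))
    (hg : ∀ n : ℤ, g n = a0⁻¹ * a2 * q ^ (-n - m + 1) * (ψ n m (N + 1) * ψ (n - 1) (m - 1) N) /
      (ψ (n - 1) (m - 1) (N + 1) * ψ n m N))
    (hden : ∀ n : ℤ, a0 * q ^ n + f n ≠ 0) :
    ∀ n : ℤ, g (n + 1) = q ^ (2 * N + 1) / (f n * g n) *
      ((1 + a0 * q ^ n * f n) / (a0 * q ^ n + f n)) := by

  intro n
  have hQ6' : Q ^ (6:ℤ) = q := by
    rw [show (6:ℤ) = ((6:ℕ):ℤ) by norm_num, zpow_natCast, hQ6]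
  have hα26' : α2 ^ (6:ℤ) = a2 := by
    rw [show (6:ℤ) = ((6:ℕ):ℤ) by norm_num, zpow_natCast, hα26]
  have h2 := hb2 (n-1) (m-1) N
  have h4 := hb4 (n-1) (m-1) N
  simp only [show n-1+1 = n by ring, show m-1+1 = m by ring, show n-1+2 = n+1 by ring] at h2 h4
  rw [show (-12)*N = (6:ℤ)*(-N + -N) by ring, zpow_mul, hQ6',
      show 12*(n-1)+12 = (6:ℤ)*(n+n) by ring, zpow_mul, hQ6',
      show (12:ℕ) = 6*2 from rfl, pow_mul, hα06] at h2
  rw [show 12*(m-1)+12 = (6:ℤ)*(m+m) by ring, zpow_mul, hQ6',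
      show (-12:ℤ) = (6:ℤ)*(-1 + -1) by norm_num, zpow_mul, hα26'] at h4
  rw [hg (n+1), hf n, hg n]
  simp only [show n+1-1 = n by ring, show -(n+1)-m+1 = -n + -m by ring,
    show (-n-m+1 : ℤ) = -n + -m + 1 by ring, show (2*N+1 : ℤ) = N + N + 1 by ring]
  simp only [zpow_add₀ hq, zpow_add₀ ha2, zpow_neg, zpow_one] at h2 h4 ⊢
  have hd := hden n
  rw [hf n] at hd
  have hA := hψ n (m-1) (N+1)
  have hB := hψ n m N
  have hC := hψ n m (N+1)
  have hD := hψ n (m-1) N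
  have hE := hψ (n-1) (m-1) N
  have hF := hψ (n-1) (m-1) (N+1)
  have hG := hψ (n+1) m (N+1)
  have hH := hψ (n+1) m N
  have hqn : q ^ n ≠ 0 := zpow_ne_zero n hq
  have hqm : q ^ m ≠ 0 := zpow_ne_zero m hq
  have hqN : q ^ N ≠ 0 := zpow_ne_zero N hq
  field_simp at h2 h4
  have e1 : 1 + a0 * q ^ n * (-(a0 * q ^ n) * (ψ n (m - 1) (N + 1) * ψ n m N) /
      (ψ n m (N + 1) * ψ n (m - 1) N)) =
      (q ^ N)⁻¹ * (q ^ N)⁻¹ * (ψ (n - 1) (m - 1) N * ψ (n + 1) m (N + 1)) /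
      (ψ n m (N + 1) * ψ n (m - 1) N) := by
    field_simp
    linear_combination h2
  have e2 : a0 * q ^ n + -(a0 * q ^ n) * (ψ n (m - 1) (N + 1) * ψ n m N) /
      (ψ n m (N + 1) * ψ n (m - 1) N) =
      -(a0 * q ^ n * (q ^ m * q ^ m * (a2 ^ 2)⁻¹) * (ψ (n - 1) (m - 1) (N + 1) * ψ (n + 1) m N)) /
      (ψ n m (N + 1) * ψ n (m - 1) N) := by
    field_simp
    linear_combination (-1 : ℂ) * h4
  rw [e1, e2]
  field_simp
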